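/- Let k be a positive integer and let G = (S,K,R) be a spider with nonempty head R. Then G is not a minimal (1,k)-polar obstruction. -/

import Mathlib

open SimpleGraph

universe u v

/-! ### Basic predicates -/

/-- `B` induces a disjoint union of complete graphs in `G` (i.e. `G[B]` is a cluster). -/
def IsClusterSet {V : Type*} (G : SimpleGraph V) (B : Set V) : Prop :=
  ∀ ⦃u w x : V⦄, u ∈ B → w ∈ B → x ∈ B → G.Adj u w → G.Adj w x → u ≠ x → G.Adj u x

/-- `A` induces a complete multipartite graph in `G`
(the complement of `G[A]` is a disjoint union of cliques). -/
def IsCompleteMultipartiteSet {V : Type*} (G : SimpleGraph V) (A : Set V) : Prop :=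
  ∀ ⦃u w x : V⦄, u ∈ A → w ∈ A → x ∈ A → u ≠ w → w ≠ x → u ≠ x →
    ¬ G.Adj u w → ¬ G.Adj w x → ¬ G.Adj u x

/-- `A` is an independent set of `G`. -/
def IsIndepSet {V : Type*} (G : SimpleGraph V) (A : Set V) : Prop :=
  ∀ ⦃u w : V⦄, u ∈ A → w ∈ A → ¬ G.Adj u w

/-- `G[B]` is a disjoint union of at most `k` complete graphs. -/
def IsClusterSetLE {V : Type*} (G : SimpleGraph V) (k : ℕ) (B : Set V) : Prop :=
  ∃ g : B → Fin k, ∀ u w : B, u ≠ w → (G.Adj u w ↔ g u = g w)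

/-- `G[A]` is a complete multipartite graph with at most `s` parts. -/
def IsCompleteMultipartiteSetLE {V : Type*} (G : SimpleGraph V) (s : ℕ) (A : Set V) : Prop :=
  ∃ f : A → Fin s, ∀ u w : A, G.Adj u w ↔ f u ≠ f w

/-! ### Polarity properties -/

/-- `G` is unipolar: a partition `(A, Aᶜ)` with `A` a clique and `G[Aᶜ]` a cluster. -/
def Unipolar {V : Type*} (G : SimpleGraph V) : Prop :=
  ∃ A : Set V, G.IsClique A ∧ IsClusterSet G Aᶜ

/-- `G` is monopolar ((1,∞)-polar). -/
def Monopolar {V : Type*} (G : SimpleGraph V) : Prop :=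
  ∃ A : Set V, _root_.IsIndepSet G A ∧ IsClusterSet G Aᶜ

/-- `G` is polar ((∞,∞)-polar). -/
def Polar {V : Type*} (G : SimpleGraph V) : Prop :=
  ∃ A : Set V, IsCompleteMultipartiteSet G A ∧ IsClusterSet G Aᶜ

/-- `G` is (s,1)-polar. -/
def SOnePolar {V : Type*} (s : ℕ) (G : SimpleGraph V) : Prop :=
  ∃ A : Set V, IsCompleteMultipartiteSetLE G s A ∧ G.IsClique Aᶜ

/-- `G` is (∞,1)-polar. -/
def InfOnePolar {V : Type*} (G : SimpleGraph V) : Prop :=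
  ∃ A : Set V, IsCompleteMultipartiteSet G A ∧ G.IsClique Aᶜ

/-- `G` is (1,k)-polar. -/
def OneKPolar {V : Type*} (k : ℕ) (G : SimpleGraph V) : Prop :=
  ∃ A : Set V, _root_.IsIndepSet G A ∧ IsClusterSetLE G k Aᶜ

/-! ### Minimal obstructions -/

def MinUnipolarObstruction {V : Type*} (G : SimpleGraph V) : Prop :=
  ¬ Unipolar G ∧ ∀ s : Set V, s ≠ Set.univ → Unipolar (G.induce s)

def MinMonopolarObstruction {V : Type*} (G : SimpleGraph V) : Prop :=
  ¬ Monopolar G ∧ ∀ s : Set V, s ≠ Set.univ → Monopolar (G.induce s)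

def MinPolarObstruction {V : Type*} (G : SimpleGraph V) : Prop :=
  ¬ Polar G ∧ ∀ s : Set V, s ≠ Set.univ → Polar (G.induce s)

def MinSOnePolarObstruction {V : Type*} (s : ℕ) (G : SimpleGraph V) : Prop :=
  ¬ SOnePolar s G ∧ ∀ t : Set V, t ≠ Set.univ → SOnePolar s (G.induce t)

def MinInfOnePolarObstruction {V : Type*} (G : SimpleGraph V) : Prop :=
  ¬ InfOnePolar G ∧ ∀ t : Set V, t ≠ Set.univ → InfOnePolar (G.induce t)

def MinOneKPolarObstruction {V : Type*} (k : ℕ) (G : SimpleGraph V) : Prop :=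
  ¬ OneKPolar k G ∧ ∀ t : Set V, t ≠ Set.univ → OneKPolar k (G.induce t)

/-! ### Graph constructions -/

/-- The join of two graphs: all edges added between the summands. -/
def joinG {α β : Type*} (G : SimpleGraph α) (H : SimpleGraph β) : SimpleGraph (α ⊕ β) where
  Adj x y := (G ⊕g H).Adj x y ∨ (x.isLeft ∧ y.isRight) ∨ (x.isRight ∧ y.isLeft)
  symm := ⟨fun x y h => by
    rcases h with h | ⟨h1, h2⟩ | ⟨h1, h2⟩
    · exact Or.inl (h.symm)
    · exact Or.inr (Or.inr ⟨h2, h1⟩)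
    · exact Or.inr (Or.inl ⟨h2, h1⟩)⟩
  loopless := ⟨fun x h => by
    rcases h with h | ⟨h1, h2⟩ | ⟨h1, h2⟩
    · exact (G ⊕g H).loopless.irrefl x h
    · cases x <;> simp_all
    · cases x <;> simp_all⟩

/-- `K_n`, the complete graph on `n` vertices. -/
def KG (n : ℕ) : SimpleGraph (Fin n) := ⊤

/-- `n K_1`, the edgeless graph on `n` vertices. -/
def EG (n : ℕ) : SimpleGraph (Fin n) := ⊥

/-- The banner graph `P`: a four-cycle `0 1 2 3` with a pendant vertex `4` adjacent to `0`. -/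
def banner : SimpleGraph (Fin 5) :=
  SimpleGraph.fromEdgeSet {s(0, 1), s(1, 2), s(2, 3), s(3, 0), s(0, 4)}

/-- The chair (fork) graph `F`: a path `0 1 2 3` with an extra vertex `4` adjacent to `1`. -/
def chair : SimpleGraph (Fin 5) :=
  SimpleGraph.fromEdgeSet {s(0, 1), s(1, 2), s(2, 3), s(1, 4)}

/-- `2P_3`. -/
def twoP3 : SimpleGraph (Fin 3 ⊕ Fin 3) := pathGraph 3 ⊕g pathGraph 3

/-- `K_{2,3}`. -/
def K23 : SimpleGraph (Fin 2 ⊕ Fin 3) := completeBipartiteGraph (Fin 2) (Fin 3)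

/-- The seven graphs `E1, E2, E3, E7, E10, E11, E12`. -/
def E1 : SimpleGraph (Fin 1 ⊕ (Fin 2 ⊕ Fin 2)) := KG 1 ⊕g (KG 2 ⊕g KG 2)
def E2 : SimpleGraph (Fin 3 ⊕ Fin 3) := pathGraph 3 ⊕g pathGraph 3
def E3 : SimpleGraph (Fin 4 ⊕ Fin 2) := cycleGraph 4 ⊕g EG 2
def E7 : SimpleGraph (Fin 1 ⊕ (Fin 3 ⊕ Fin 2)) := KG 1 ⊕g (pathGraph 3 ⊕g KG 2)ᶜ
def E10 : SimpleGraph (Fin 1 ⊕ Fin 5) := KG 1 ⊕g cycleGraph 5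
def E11 : SimpleGraph (Fin 1 ⊕ Fin 5) := KG 1 ⊕g banner
def E12 : SimpleGraph (Fin 1 ⊕ Fin 5) := KG 1 ⊕g (pathGraph 5)ᶜ

/-! ### P4 structure -/

/-- `W` induces a path on four vertices in `G`. -/
def InducesP4 {V : Type*} (G : SimpleGraph V) (W : Set V) : Prop :=
  Nonempty (G.induce W ≃g pathGraph 4)

/-- A graph is a cograph if it has no induced `P_4`. -/
def Cograph {V : Type*} (G : SimpleGraph V) : Prop :=
  ∀ W : Set V, ¬ InducesP4 G W

/-- `G` is `P_4`-sparse: any five vertices induce at most one `P_4`. -/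
def P4Sparse {V : Type*} (G : SimpleGraph V) : Prop :=
  ∀ s : Set V, s.ncard = 5 → ∀ W₁ W₂ : Set V, W₁ ⊆ s → W₂ ⊆ s →
    InducesP4 G W₁ → InducesP4 G W₂ → W₁ = W₂

/-- `G` is `P_4`-extendible. -/
def P4Extendible {V : Type*} (G : SimpleGraph V) : Prop :=
  ∀ W : Set V, InducesP4 G W →
    ∀ v₁ v₂ : V, v₁ ∉ W → v₂ ∉ W →
      (∃ W₁ : Set V, InducesP4 G W₁ ∧ v₁ ∈ W₁ ∧ (W₁ ∩ W).Nonempty) →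
      (∃ W₂ : Set V, InducesP4 G W₂ ∧ v₂ ∈ W₂ ∧ (W₂ ∩ W).Nonempty) → v₁ = v₂

/-! ### Spiders -/

/-- `(S, K, R)` is a spider partition of `G`. -/
def IsSpiderPartition {V : Type*} (G : SimpleGraph V) (S K R : Set V) : Prop :=
  S ∪ K ∪ R = Set.univ ∧ Disjoint S K ∧ Disjoint S R ∧ Disjoint K R ∧
  S.ncard = K.ncard ∧ 2 ≤ K.ncard ∧
  G.IsClique K ∧ _root_.IsIndepSet G S ∧
  (∃ f : S → K, Function.Bijective f ∧
    ((∀ s : S, ∀ k : K, G.Adj s k ↔ (f s : V) = k) ∨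
     (∀ s : S, ∀ k : K, G.Adj s k ↔ (f s : V) ≠ k))) ∧
  (∀ r ∈ R, ∀ k ∈ K, G.Adj r k) ∧
  (∀ r ∈ R, ∀ s ∈ S, ¬ G.Adj r s)

/-- `G` is a `B`-spider with partition `(S, K, R)`, where `B` is a fixed base graph with
midpoint set `M` and endpoint set `E`: `G` is obtained from a copy of `B` (whose midpoints
form `K` and whose endpoints form `S`) by adding the set `R` of vertices, each adjacent to
all midpoints and to no endpoint. -/
def IsBaseSpider {n : ℕ} {V : Type*} (B : SimpleGraph (Fin n)) (M E : Set (Fin n))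
    (G : SimpleGraph V) (S K R : Set V) : Prop :=
  ∃ f : Fin n → V, Function.Injective f ∧
    (∀ i j : Fin n, G.Adj (f i) (f j) ↔ B.Adj i j) ∧
    K = f '' M ∧ S = f '' E ∧ R = (Set.range f)ᶜ ∧
    (∀ r ∈ R, ∀ x ∈ K, G.Adj r x) ∧
    (∀ r ∈ R, ∀ x ∈ S, ¬ G.Adj r x)

/-- For `k` a positive integer, a spider `G = (S, K, R)` with nonempty head `R`
is not a minimal `(1,k)`-polar obstruction. -/
theorem stmt_12 {V : Type*} [Fintype V] (k : ℕ) (hk : 1 ≤ k) (G : SimpleGraph V)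
    (S K R : Set V) (h : IsSpiderPartition G S K R) (hR : R.Nonempty) :
    ¬ MinOneKPolarObstruction k G := by
  rintro ⟨hnot, hmin⟩
  obtain ⟨hU, hSK, hSR, hKR, hcard, hK2, hKcl, hSind, -, hRK, hRS⟩ := h
  have hSne : S.Nonempty := Set.nonempty_of_ncard_ne_zero (by omega)
  obtain ⟨s₀, hs₀⟩ := hSne
  have ht : ({s₀}ᶜ : Set V) ≠ Set.univ := by
    intro h'
    have : s₀ ∈ ({s₀}ᶜ : Set V) := h' ▸ Set.mem_univ s₀
    simp at this
  obtain ⟨A, hAind, g, hg⟩ := hmin {s₀}ᶜ ht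
  have hKt : ∀ v ∈ K, v ∈ ({s₀}ᶜ : Set V) := by
    intro v hv
    simp only [Set.mem_compl_iff, Set.mem_singleton_iff]
    rintro rfl; exact Set.disjoint_left.mp hSK hs₀ hv
  have hRt : ∀ v ∈ R, v ∈ ({s₀}ᶜ : Set V) := by
    intro v hv
    simp only [Set.mem_compl_iff, Set.mem_singleton_iff]
    rintro rfl; exact Set.disjoint_left.mp hSR hs₀ hv
  obtain ⟨k₁, k₂, hk₁, hk₂, hk12⟩ := (Set.one_lt_ncard_iff K.toFinite).mp (by omega)
  have hex : ∃ c, ∃ hc : c ∈ K, (⟨c, hKt c hc⟩ : ({s₀}ᶜ : Set V)) ∉ A := by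
    by_contra hcon
    push_neg at hcon
    exact hAind (hcon k₁ hk₁) (hcon k₂ hk₂) (hKcl hk₁ hk₂ hk12)
  obtain ⟨c, hcK, hcA⟩ := hex
  set A' : Set V :=
    S ∪ {v | ∃ hv : v ∈ R, (⟨v, hRt v hv⟩ : ({s₀}ᶜ : Set V)) ∈ A} with hA'def
  have hind : _root_.IsIndepSet G A' := by
    rintro u v hu hv hadj
    rcases hu with hu | ⟨huR, huA⟩ <;> rcases hv with hv | ⟨hvR, hvA⟩
    · exact hSind hu hv hadj
    · exact hRS v hvR u hu hadj.symm
    · exact hRS u huR v hv hadj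
    · exact hAind huA hvA hadj
  have hcompl : ∀ v, v ∈ A'ᶜ →
      v ∈ K ∨ ∃ hv : v ∈ R, (⟨v, hRt v hv⟩ : ({s₀}ᶜ : Set V)) ∉ A := by
    intro v hv
    have hvU : v ∈ S ∪ K ∪ R := hU ▸ Set.mem_univ v
    rcases hvU with (hvS | hvK) | hvR
    · exact absurd (Or.inl hvS) hv
    · exact Or.inl hvK
    · exact Or.inr ⟨hvR, fun hA => hv (Or.inr ⟨hvR, hA⟩)⟩
  -- every vertex of R ∩ Aᶜ has the same g-class as c
  have key : ∀ v, (hv : v ∈ R) → (hvA : (⟨v, hRt v hv⟩ : ({s₀}ᶜ : Set V)) ∉ A) →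
      g ⟨⟨v, hRt v hv⟩, hvA⟩ = g ⟨⟨c, hKt c hcK⟩, hcA⟩ := by
    intro v hv hvA
    have hvc : v ≠ c := fun h => Set.disjoint_left.mp hKR hcK (h ▸ hv)
    have hne : (⟨⟨v, hRt v hv⟩, hvA⟩ : ↥(Aᶜ)) ≠ ⟨⟨c, hKt c hcK⟩, hcA⟩ := by
      intro h; exact hvc (congrArg (fun x => x.1.1) h)
    exact (hg _ _ hne).mp (hRK v hv c hcK)
  have hclique : ∀ u ∈ A'ᶜ, ∀ w ∈ A'ᶜ, u ≠ w → G.Adj u w := by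
    intro u hu w hw huw
    rcases hcompl u hu with huK | ⟨huR, huA⟩ <;> rcases hcompl w hw with hwK | ⟨hwR, hwA⟩
    · exact hKcl huK hwK huw
    · exact (hRK w hwR u huK).symm
    · exact hRK u huR w hwK
    · have hne : (⟨⟨u, hRt u huR⟩, huA⟩ : ↥(Aᶜ)) ≠ ⟨⟨w, hRt w hwR⟩, hwA⟩ := by
        intro h; exact huw (congrArg (fun x => x.1.1) h)
      have := (hg _ _ hne).mpr ((key u huR huA).trans (key w hwR hwA).symm)
      exact this
  refine hnot ⟨A', hind, fun _ => ⟨0, hk⟩, fun u w huw => ?_⟩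
  constructor
  · intro _; rfl
  · intro _
    exact hclique u u.2 w w.2 (fun h => huw (Subtype.ext h))
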